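/- arXiv:2301.13821 — 2 statements merged into one kernel-verified Lean document; each statement's English description precedes it below -/
import Mathlib

section
/- Let G be a compact group acting continuously on a compact metric space M, let F: M → ℝ^K be a continuous G-invariant map that separates orbits (F(x) = F(y) implies x and y lie in the same G-orbit), and let f: M → ℝ be a continuous G-invariant function. Then for every ε > 0 there exists a continuous function g: ℝ^K → ℝ such that |f(x) − g(F(x))| ≤ ε for all x ∈ M. (In fact f = g ∘ F for some continuous g on the image F(M).) -/
/-- Separation implies universality: a continuous invariant function on a
compact space can be uniformly approximated by continuous functions of a
continuous separating invariant. -/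
theorem separation_implies_universality
    (G : Type*) [Group G] [TopologicalSpace G] [CompactSpace G]
    [IsTopologicalGroup G]
    (M : Type*) [MetricSpace M] [CompactSpace M]
    [MulAction G M] [ContinuousSMul G M]
    (K : ℕ) (F : M → EuclideanSpace ℝ (Fin K)) (hFcont : Continuous F)
    (hFinv : ∀ (g : G) (x : M), F (g • x) = F x)
    (hFsep : ∀ x y : M, F x = F y → ∃ g : G, y = g • x)
    (f : M → ℝ) (hfcont : Continuous f)
    (hfinv : ∀ (g : G) (x : M), f (g • x) = f x) :
    ∀ ε > 0, ∃ g : EuclideanSpace ℝ (Fin K) → ℝ,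
      Continuous g ∧ ∀ x : M, |f x - g (F x)| ≤ ε := by
  intro ε hε
  -- key consequence of separation + invariance: f factors through F
  have hfF : ∀ x y : M, F x = F y → f x = f y := by
    intro x y h
    obtain ⟨g, rfl⟩ := hFsep x y h
    exact (hfinv g x).symm
  -- the corestriction of F to its range
  set S : Set (EuclideanSpace ℝ (Fin K)) := Set.range F with hS
  set φ : M → S := fun x => ⟨F x, Set.mem_range_self x⟩ with hφ
  have hφcont : Continuous φ := hFcont.subtype_mk _
  have hφsurj : Function.Surjective φ := by
    rintro ⟨y, x, rfl⟩
    exact ⟨x, rfl⟩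
  have hq : Topology.IsQuotientMap φ := Topology.IsQuotientMap.of_surjective_continuous hφsurj hφcont
  -- define g₀ on the range
  set g₀ : S → ℝ := fun s => f s.2.choose with hg₀
  have hg₀φ : ∀ x : M, g₀ (φ x) = f x := by
    intro x
    exact hfF _ _ ((φ x).2.choose_spec)
  have hg₀cont : Continuous g₀ := by
    rw [hq.continuous_iff]
    have : (g₀ ∘ φ) = f := funext hg₀φ
    rw [this]; exact hfcont
  -- Tietze extension
  have hSclosed : IsClosed S := (isCompact_range hFcont).isClosed
  obtain ⟨g, hg⟩ := ContinuousMap.exists_restrict_eq (Y := ℝ) hSclosed ⟨g₀, hg₀cont⟩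
  refine ⟨g, g.continuous, fun x => ?_⟩
  have : g (F x) = f x := by
    have h1 := ContinuousMap.congr_fun hg (φ x)
    simp only [ContinuousMap.restrict_apply, ContinuousMap.coe_mk] at h1
    rw [← hg₀φ x, ← h1]
  simp [this, le_of_lt hε]
end

section
/- Let X = (x_1,…,x_n), Y = (y_1,…,y_n) ∈ ℝ^{d×n} and suppose the multisets of labeled Gram rows agree in the following strong sense: there exist indices i_1,…,i_r and j_1,…,j_r such that x_{i_1},…,x_{i_r} span the column span of X, ⟨x_{i_a}, x_{i_b}⟩ = ⟨y_{j_a}, y_{j_b}⟩ for all a,b, and there exists σ ∈ S_n with σ(i_a) = j_a and ⟨x_{i_a}, x_k⟩ = ⟨y_{j_a}, y_{σ(k)}⟩ for all a = 1,…,r and all k. If additionally y_{j_1},…,y_{j_r} span the column span of Y and the column spans of X and Y have equal dimension r, then there exists T ∈ O(d) with T x_k = y_{σ(k)} for all k. -/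
open Matrix

/-- Matching inner products with a spanning set determines the configuration
up to an orthogonal transformation. -/
theorem spanning_gram_match_implies_orthogonal
    (d n r : ℕ) (X Y : Fin n → (Fin d → ℝ))
    (ii jj : Fin r → Fin n) (σ : Equiv.Perm (Fin n))
    (hspanX : Submodule.span ℝ (Set.range (X ∘ ii))
      = Submodule.span ℝ (Set.range X))
    (hgram : ∀ a b, X (ii a) ⬝ᵥ X (ii b) = Y (jj a) ⬝ᵥ Y (jj b))
    (hσ : ∀ a, σ (ii a) = jj a)
    (hmatch : ∀ a k, X (ii a) ⬝ᵥ X k = Y (jj a) ⬝ᵥ Y (σ k))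
    (hspanY : Submodule.span ℝ (Set.range (Y ∘ jj))
      = Submodule.span ℝ (Set.range Y))
    (hrX : Module.finrank ℝ (Submodule.span ℝ (Set.range X)) = r)
    (hrY : Module.finrank ℝ (Submodule.span ℝ (Set.range Y)) = r) :
    ∃ T : Matrix (Fin d) (Fin d) ℝ,
      T ∈ Matrix.orthogonalGroup (Fin d) ℝ ∧
      ∀ k, T.mulVec (X k) = Y (σ k) := by
  classical
  let X' : Fin n → EuclideanSpace ℝ (Fin d) := fun k => WithLp.toLp 2 (X k)
  let Y' : Fin n → EuclideanSpace ℝ (Fin d) := fun k => WithLp.toLp 2 (Y k)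
  have hdot : ∀ u v : EuclideanSpace ℝ (Fin d), (inner ℝ u v : ℝ) = u ⬝ᵥ v := by
    intro u v; simp [PiLp.inner_apply, dotProduct, mul_comm]
  let SX : Submodule ℝ (EuclideanSpace ℝ (Fin d)) := Submodule.span ℝ (Set.range X')
  let SY : Submodule ℝ (EuclideanSpace ℝ (Fin d)) := Submodule.span ℝ (Set.range Y')
  have hmemX : ∀ k, X' k ∈ SX := fun k => Submodule.subset_span ⟨k, rfl⟩
  have hmemY : ∀ k, Y' k ∈ SY := fun k => Submodule.subset_span ⟨k, rfl⟩
  have hspanX'' : Submodule.span ℝ (Set.range (X' ∘ ii)) = SX := by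
    have hX : X' = (WithLp.linearEquiv 2 ℝ (Fin d → ℝ)).symm ∘ X := rfl
    have := congrArg (Submodule.map
      (WithLp.linearEquiv 2 ℝ (Fin d → ℝ)).symm.toLinearMap) hspanX
    rw [← Submodule.span_image, ← Submodule.span_image, ← Set.range_comp,
      ← Set.range_comp] at this
    exact this
  have hspanY'' : Submodule.span ℝ (Set.range (Y' ∘ jj)) = SY := by
    have hY : Y' = (WithLp.linearEquiv 2 ℝ (Fin d → ℝ)).symm ∘ Y := rfl
    have := congrArg (Submodule.map
      (WithLp.linearEquiv 2 ℝ (Fin d → ℝ)).symm.toLinearMap) hspanY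
    rw [← Submodule.span_image, ← Submodule.span_image, ← Set.range_comp,
      ← Set.range_comp] at this
    exact this
  have hrX' : Module.finrank ℝ SX = r := by
    have hX : X' = (WithLp.linearEquiv 2 ℝ (Fin d → ℝ)).symm ∘ X := rfl
    have hS : SX = (Submodule.span ℝ (Set.range X)).map
        ((WithLp.linearEquiv 2 ℝ (Fin d → ℝ)).symm : (Fin d → ℝ) →ₗ[ℝ] _) := by
      rw [← Submodule.span_image, ← Set.range_comp]; rfl
    rw [hS]
    exact (LinearEquiv.finrank_map_eq _ _).trans hrX
  let vX : Fin r → SX := fun a => ⟨X' (ii a), hmemX (ii a)⟩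
  have hspanX' : ⊤ ≤ Submodule.span ℝ (Set.range vX) := by
    have hinj : Function.Injective SX.subtype := Subtype.coe_injective
    have hmap : (Submodule.span ℝ (Set.range vX)).map SX.subtype
        = Submodule.span ℝ (Set.range (X' ∘ ii)) := by
      rw [Submodule.map_span, ← Set.range_comp]
      rfl
    have heq : (Submodule.span ℝ (Set.range vX)).map SX.subtype
        = (⊤ : Submodule ℝ SX).map SX.subtype := by
      rw [hmap, hspanX'', Submodule.map_top, Submodule.range_subtype]
    exact le_of_eq ((Submodule.map_injective_of_injective hinj heq).symm)
  have hcard : Fintype.card (Fin r) = Module.finrank ℝ SX := by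
    simpa using hrX'.symm
  let bX : Module.Basis (Fin r) ℝ SX := basisOfTopLeSpanOfCardEqFinrank vX hspanX' hcard
  have hbX : ∀ a, (bX a : EuclideanSpace ℝ (Fin d)) = X' (ii a) := fun a => by
    simp [bX, vX, coe_basisOfTopLeSpanOfCardEqFinrank]
  let f : SX →ₗ[ℝ] EuclideanSpace ℝ (Fin d) := bX.constr ℝ (fun a => Y' (jj a))
  have hf : ∀ a, f (bX a) = Y' (jj a) := fun a => bX.constr_basis ℝ _ a
  have hbase : ∀ a b, (inner ℝ (f (bX a)) (f (bX b)) : ℝ) = inner ℝ (bX a) (bX b) := by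
    intro a b
    rw [hf, hf, Submodule.coe_inner, hbX, hbX, hdot, hdot]; exact (hgram a b).symm
  have hinner : ∀ u v : SX, (inner ℝ (f u) (f v) : ℝ) = inner ℝ u v := by
    intro u v
    conv_lhs => rw [← bX.sum_repr u, ← bX.sum_repr v]
    conv_rhs => rw [← bX.sum_repr u, ← bX.sum_repr v]
    simp only [map_sum, _root_.map_smul, inner_sum, sum_inner, real_inner_smul_left,
      real_inner_smul_right]
    refine Finset.sum_congr rfl fun a _ => Finset.sum_congr rfl fun b _ => ?_
    rw [hbase]
  let fi : SX →ₗᵢ[ℝ] EuclideanSpace ℝ (Fin d) := f.isometryOfInner hinner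
  let T : EuclideanSpace ℝ (Fin d) →ₗᵢ[ℝ] EuclideanSpace ℝ (Fin d) := fi.extend
  have hT : ∀ u : SX, T u = f u := fun u => fi.extend_apply u
  have hfmem : ∀ u : SX, f u ∈ SY := by
    intro u
    rw [← bX.sum_repr u]
    simp only [map_sum, _root_.map_smul, hf]
    exact Submodule.sum_mem _ fun a _ => Submodule.smul_mem _ _ (hmemY (jj a))
  have hkey : ∀ k, T (X' k) = Y' (σ k) := by
    intro k
    have hXk : X' k ∈ SX := hmemX k
    have hTXk : T (X' k) = f ⟨X' k, hXk⟩ := hT ⟨X' k, hXk⟩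
    set z : EuclideanSpace ℝ (Fin d) := f ⟨X' k, hXk⟩ - Y' (σ k) with hz
    have hzmem : z ∈ SY := Submodule.sub_mem _ (hfmem _) (hmemY (σ k))
    have hzorth : ∀ b, (inner ℝ (Y' (jj b)) z : ℝ) = 0 := by
      intro b
      have h1 : (inner ℝ (Y' (jj b)) (f ⟨X' k, hXk⟩) : ℝ) = X (ii b) ⬝ᵥ X k := by
        rw [← hf b, hinner, Submodule.coe_inner, hbX, hdot]
      have h2 : (inner ℝ (Y' (jj b)) (Y' (σ k)) : ℝ) = Y (jj b) ⬝ᵥ Y (σ k) := hdot _ _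
      rw [hz, inner_sub_right, h1, h2, hmatch]
      ring
    have hzY : ∀ w ∈ SY, (inner ℝ w z : ℝ) = 0 := by
      intro w hw
      have hw' : w ∈ Submodule.span ℝ (Set.range (Y' ∘ jj)) := by
        have : SY = Submodule.span ℝ (Set.range (Y' ∘ jj)) := hspanY''.symm
        rwa [this] at hw
      clear hw
      induction hw' using Submodule.span_induction with
      | mem w hw => obtain ⟨b, rfl⟩ := hw; exact hzorth b
      | zero => simp
      | add w₁ w₂ _ _ h1 h2 => rw [inner_add_left, h1, h2]; ring
      | smul c w _ h => rw [real_inner_smul_left, h]; ring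
    have hz0 : z = 0 := inner_self_eq_zero.mp (hzY z hzmem)
    rw [hTXk, ← sub_eq_zero]
    exact hz0
  -- build the matrix
  let e : EuclideanSpace ℝ (Fin d) ≃ₗ[ℝ] (Fin d → ℝ) :=
    (EuclideanSpace.equiv (Fin d) ℝ : EuclideanSpace ℝ (Fin d) ≃L[ℝ] (Fin d → ℝ))
  let M : Matrix (Fin d) (Fin d) ℝ :=
    LinearMap.toMatrix' (e.toLinearMap ∘ₗ T.toLinearMap ∘ₗ e.symm.toLinearMap)
  have hM : ∀ v : Fin d → ℝ, M.mulVec v = (T (WithLp.toLp 2 v)).ofLp := by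
    intro v
    have h1 : M.mulVec v = Matrix.toLin' M v := (Matrix.toLin'_apply _ _).symm
    rw [h1, Matrix.toLin'_toMatrix']
    rfl
  have hcol : ∀ i, (fun k => M k i) = (T (WithLp.toLp 2 (Pi.single i 1))).ofLp := by
    intro i
    funext k
    have h := congrFun (hM (Pi.single i 1)) k
    rw [Matrix.mulVec_single] at h
    simpa using h
  have horth : M ∈ Matrix.orthogonalGroup (Fin d) ℝ := by
    rw [Matrix.mem_orthogonalGroup_iff']
    ext i j
    have h1 : (Mᵀ * M) i j = (fun k => M k i) ⬝ᵥ (fun k => M k j) := by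
      simp [Matrix.mul_apply, Matrix.star_apply, dotProduct]
    rw [h1, hcol i, hcol j, ← hdot, T.inner_map_map, hdot]
    simp [dotProduct, Pi.single_apply, Matrix.one_apply, eq_comm]
  exact ⟨M, horth, fun k => by rw [hM, hkey]⟩
end
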